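/- With the setup of the product-of-simplices, d = 2, sorted-weights case, for each mapping J : {1,…,τ} → ℤ with J(i) ∈ {1,…,p_i} for all i, define the halfspace H_J = {(x, y, z) ∈ ℝ^η × ℝ × ℝ : y ≤ Σ_{i=1}^τ ( w̃_{i,J(i)} z + Σ_{j = J(i)+1}^{p_i} (w̃_{i,j} − w̃_{i,J(i)}) x_{i,j} + Σ_{j=1}^{p_i} w^2_{i,j} x_{i,j} ) + (b^1 − b^2) z + b^2}, and let P be the intersection of H_{J'} over all such mappings J'. Then the family of halfspaces is irredundant: for every mapping J, the intersection of all H_{J'} over mappings J' with H_{J'} ≠ H_J (as subsets of ℝ^η × ℝ × ℝ) is a strict superset of P. -/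

import Mathlib

noncomputable section

/-- The halfspace `H_J` associated with the mapping `J`, in the variables `(x, y, z)`. -/
def halfspaceJ {τ : ℕ} (p : Fin τ → ℕ)
    (w1 w2 : (Σ i : Fin τ, Fin (p i)) → ℝ) (b1 b2 : ℝ)
    (J : (i : Fin τ) → Fin (p i)) :
    Set (((Σ i : Fin τ, Fin (p i)) → ℝ) × ℝ × ℝ) :=
  {q | q.2.1 ≤ ∑ i, ((w1 ⟨i, J i⟩ - w2 ⟨i, J i⟩) * q.2.2
      + ∑ j ∈ Finset.univ.filter (fun j => J i < j),
          ((w1 ⟨i, j⟩ - w2 ⟨i, j⟩) - (w1 ⟨i, J i⟩ - w2 ⟨i, J i⟩)) * q.1 ⟨i, j⟩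
      + ∑ j, w2 ⟨i, j⟩ * q.1 ⟨i, j⟩)
    + (b1 - b2) * q.2.2 + b2}

set_option maxHeartbeats 1000000

/-- Irredundancy of the family of halfspaces `H_J`: removing (all copies of) any one
halfspace strictly enlarges the intersection. -/
theorem stmt11 {τ : ℕ} (hτ : 1 ≤ τ) (p : Fin τ → ℕ) (hp : ∀ i, 1 ≤ p i)
    (w1 w2 : (Σ i : Fin τ, Fin (p i)) → ℝ) (b1 b2 : ℝ)
    (hsorted : ∀ i : Fin τ, Monotone fun j : Fin (p i) => w1 ⟨i, j⟩ - w2 ⟨i, j⟩)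
    (J : (i : Fin τ) → Fin (p i)) :
    (⋂ J' : (i : Fin τ) → Fin (p i), halfspaceJ p w1 w2 b1 b2 J')
      ⊂ ⋂ J' ∈ {J' : (i : Fin τ) → Fin (p i) |
          halfspaceJ p w1 w2 b1 b2 J' ≠ halfspaceJ p w1 w2 b1 b2 J},
          halfspaceJ p w1 w2 b1 b2 J' := by
  classical
  -- the chosen point: x0 indicator of J, z0 = 1/2
  set x0 : (Σ i : Fin τ, Fin (p i)) → ℝ := fun s => if s.2 = J s.1 then 1 else 0 with hx0
  set z0 : ℝ := 1/2 with hz0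
  set F : ((i : Fin τ) → Fin (p i)) → ℝ := fun J' =>
    ∑ i, ((w1 ⟨i, J' i⟩ - w2 ⟨i, J' i⟩) * z0
      + ∑ j ∈ Finset.univ.filter (fun j => J' i < j),
          ((w1 ⟨i, j⟩ - w2 ⟨i, j⟩) - (w1 ⟨i, J' i⟩ - w2 ⟨i, J' i⟩)) * x0 ⟨i, j⟩
      + ∑ j, w2 ⟨i, j⟩ * x0 ⟨i, j⟩)
    + (b1 - b2) * z0 + b2 with hF
  have hmem : ∀ (J' : (i : Fin τ) → Fin (p i)) (y : ℝ),
      ((x0, y, z0) ∈ halfspaceJ p w1 w2 b1 b2 J') ↔ y ≤ F J' := fun J' y => Iff.rfl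
  -- closed form of the summand of F
  have hsummand : ∀ (J' : (i : Fin τ) → Fin (p i)) (i : Fin τ),
      ((w1 ⟨i, J' i⟩ - w2 ⟨i, J' i⟩) * z0
      + ∑ j ∈ Finset.univ.filter (fun j => J' i < j),
          ((w1 ⟨i, j⟩ - w2 ⟨i, j⟩) - (w1 ⟨i, J' i⟩ - w2 ⟨i, J' i⟩)) * x0 ⟨i, j⟩
      + ∑ j, w2 ⟨i, j⟩ * x0 ⟨i, j⟩)
      = (w1 ⟨i, J' i⟩ - w2 ⟨i, J' i⟩) * z0
      + (if J' i < J i then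
          (w1 ⟨i, J i⟩ - w2 ⟨i, J i⟩) - (w1 ⟨i, J' i⟩ - w2 ⟨i, J' i⟩) else 0)
      + w2 ⟨i, J i⟩ := by
    intro J' i
    have h1 : ∑ j ∈ Finset.univ.filter (fun j => J' i < j),
          ((w1 ⟨i, j⟩ - w2 ⟨i, j⟩) - (w1 ⟨i, J' i⟩ - w2 ⟨i, J' i⟩)) * x0 ⟨i, j⟩
        = if J' i < J i then
          (w1 ⟨i, J i⟩ - w2 ⟨i, J i⟩) - (w1 ⟨i, J' i⟩ - w2 ⟨i, J' i⟩) else 0 := by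
      simp only [hx0, mul_ite, mul_one, mul_zero]
      rw [Finset.sum_ite_eq' (Finset.univ.filter (fun j => J' i < j)) (J i)]
      simp [Finset.mem_filter]
    have h2 : ∑ j, w2 ⟨i, j⟩ * x0 ⟨i, j⟩ = w2 ⟨i, J i⟩ := by
      simp only [hx0, mul_ite, mul_one, mul_zero]
      rw [Finset.sum_ite_eq' Finset.univ (J i)]
      simp
    rw [h1, h2]
  -- the per-coordinate inequality
  have hA : ∀ (J' : (i : Fin τ) → Fin (p i)) (i : Fin τ),
      ((w1 ⟨i, J i⟩ - w2 ⟨i, J i⟩) * z0 + (0:ℝ) + w2 ⟨i, J i⟩)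
      ≤ (w1 ⟨i, J' i⟩ - w2 ⟨i, J' i⟩) * z0
      + (if J' i < J i then
          (w1 ⟨i, J i⟩ - w2 ⟨i, J i⟩) - (w1 ⟨i, J' i⟩ - w2 ⟨i, J' i⟩) else 0)
      + w2 ⟨i, J i⟩ := by
    intro J' i
    rcases lt_or_ge (J' i) (J i) with h | h
    · have := hsorted i h.le
      simp only [if_pos h, hz0]
      simp only at this
      nlinarith
    · have := hsorted i h
      simp only [if_neg (not_lt.mpr h), hz0]
      simp only at this
      nlinarith
  have hAstrict : ∀ (J' : (i : Fin τ) → Fin (p i)) (i : Fin τ),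
      w1 ⟨i, J' i⟩ - w2 ⟨i, J' i⟩ ≠ w1 ⟨i, J i⟩ - w2 ⟨i, J i⟩ →
      ((w1 ⟨i, J i⟩ - w2 ⟨i, J i⟩) * z0 + (0:ℝ) + w2 ⟨i, J i⟩)
      < (w1 ⟨i, J' i⟩ - w2 ⟨i, J' i⟩) * z0
      + (if J' i < J i then
          (w1 ⟨i, J i⟩ - w2 ⟨i, J i⟩) - (w1 ⟨i, J' i⟩ - w2 ⟨i, J' i⟩) else 0)
      + w2 ⟨i, J i⟩ := by
    intro J' i hne
    rcases lt_or_ge (J' i) (J i) with h | h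
    · have := hsorted i h.le
      simp only [if_pos h, hz0]
      simp only at this
      rcases this.lt_or_eq with h' | h'
      · nlinarith
      · exact absurd h' hne
    · have := hsorted i h
      simp only [if_neg (not_lt.mpr h), hz0]
      simp only at this
      rcases this.lt_or_eq with h' | h'
      · nlinarith
      · exact absurd h'.symm hne
  -- value of F at J itself
  have hFJ : F J = ∑ i, ((w1 ⟨i, J i⟩ - w2 ⟨i, J i⟩) * z0 + (0:ℝ) + w2 ⟨i, J i⟩)
      + (b1 - b2) * z0 + b2 := by
    simp only [hF]
    rw [Finset.sum_congr rfl fun i (_ : i ∈ Finset.univ) => hsummand J i]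
    simp
  -- F J ≤ F J'
  have hle : ∀ J', F J ≤ F J' := by
    intro J'
    rw [hFJ]
    simp only [hF]
    have hsum : ∑ i, ((w1 ⟨i, J i⟩ - w2 ⟨i, J i⟩) * z0 + (0:ℝ) + w2 ⟨i, J i⟩)
        ≤ ∑ i, ((w1 ⟨i, J' i⟩ - w2 ⟨i, J' i⟩) * z0
          + ∑ j ∈ Finset.univ.filter (fun j => J' i < j),
              ((w1 ⟨i, j⟩ - w2 ⟨i, j⟩) - (w1 ⟨i, J' i⟩ - w2 ⟨i, J' i⟩)) * x0 ⟨i, j⟩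
          + ∑ j, w2 ⟨i, j⟩ * x0 ⟨i, j⟩) :=
      Finset.sum_le_sum fun i _ => by rw [hsummand J' i]; exact hA J' i
    linarith
  -- strict inequality when weights differ somewhere
  have hlt : ∀ J', (∃ i, w1 ⟨i, J' i⟩ - w2 ⟨i, J' i⟩ ≠ w1 ⟨i, J i⟩ - w2 ⟨i, J i⟩) →
      F J < F J' := by
    intro J' ⟨i, hi⟩
    rw [hFJ]
    simp only [hF]
    have hsum : ∑ i, ((w1 ⟨i, J i⟩ - w2 ⟨i, J i⟩) * z0 + (0:ℝ) + w2 ⟨i, J i⟩)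
        < ∑ i, ((w1 ⟨i, J' i⟩ - w2 ⟨i, J' i⟩) * z0
          + ∑ j ∈ Finset.univ.filter (fun j => J' i < j),
              ((w1 ⟨i, j⟩ - w2 ⟨i, j⟩) - (w1 ⟨i, J' i⟩ - w2 ⟨i, J' i⟩)) * x0 ⟨i, j⟩
          + ∑ j, w2 ⟨i, j⟩ * x0 ⟨i, j⟩) := by
      refine Finset.sum_lt_sum (fun k _ => ?_) ⟨i, Finset.mem_univ i, ?_⟩
      · rw [hsummand J' k]; exact hA J' k
      · rw [hsummand J' i]; exact hAstrict J' i hi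
    linarith
  -- ties everywhere imply equal halfspaces
  have hkey : ∀ (i : Fin τ) (a : Fin (p i)),
      w1 ⟨i, a⟩ - w2 ⟨i, a⟩ = w1 ⟨i, J i⟩ - w2 ⟨i, J i⟩ →
      ∀ q1 : (Σ i : Fin τ, Fin (p i)) → ℝ,
      ∑ j ∈ Finset.univ.filter (fun j => a < j),
          ((w1 ⟨i, j⟩ - w2 ⟨i, j⟩) - (w1 ⟨i, a⟩ - w2 ⟨i, a⟩)) * q1 ⟨i, j⟩
      = ∑ j ∈ Finset.univ.filter
          (fun j => w1 ⟨i, J i⟩ - w2 ⟨i, J i⟩ < w1 ⟨i, j⟩ - w2 ⟨i, j⟩),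
          ((w1 ⟨i, j⟩ - w2 ⟨i, j⟩) - (w1 ⟨i, J i⟩ - w2 ⟨i, J i⟩)) * q1 ⟨i, j⟩ := by
    intro i a ha q1
    rw [ha]
    refine (Finset.sum_subset ?_ ?_).symm
    · intro j hj
      simp only [Finset.mem_filter, Finset.mem_univ, true_and] at hj ⊢
      by_contra hle'
      push_neg at hle'
      have : w1 ⟨i, j⟩ - w2 ⟨i, j⟩ ≤ w1 ⟨i, a⟩ - w2 ⟨i, a⟩ := hsorted i hle'
      rw [ha] at this
      exact absurd hj (not_lt.mpr this)
    · intro j hj hj'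
      simp only [Finset.mem_filter, Finset.mem_univ, true_and] at hj hj'
      push_neg at hj'
      have h1 : w1 ⟨i, a⟩ - w2 ⟨i, a⟩ ≤ w1 ⟨i, j⟩ - w2 ⟨i, j⟩ := hsorted i hj.le
      rw [ha] at h1
      have : w1 ⟨i, j⟩ - w2 ⟨i, j⟩ = w1 ⟨i, J i⟩ - w2 ⟨i, J i⟩ := le_antisymm hj' h1
      rw [this]
      ring
  have heq : ∀ J', (∀ i : Fin τ, w1 ⟨i, J' i⟩ - w2 ⟨i, J' i⟩
        = w1 ⟨i, J i⟩ - w2 ⟨i, J i⟩) →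
      halfspaceJ p w1 w2 b1 b2 J' = halfspaceJ p w1 w2 b1 b2 J := by
    intro J' h
    unfold halfspaceJ
    ext q
    simp only [Set.mem_setOf_eq]
    have hs : ∀ i : Fin τ,
        ((w1 ⟨i, J' i⟩ - w2 ⟨i, J' i⟩) * q.2.2
        + ∑ j ∈ Finset.univ.filter (fun j => J' i < j),
            ((w1 ⟨i, j⟩ - w2 ⟨i, j⟩) - (w1 ⟨i, J' i⟩ - w2 ⟨i, J' i⟩)) * q.1 ⟨i, j⟩
        + ∑ j, w2 ⟨i, j⟩ * q.1 ⟨i, j⟩)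
        = ((w1 ⟨i, J i⟩ - w2 ⟨i, J i⟩) * q.2.2
        + ∑ j ∈ Finset.univ.filter (fun j => J i < j),
            ((w1 ⟨i, j⟩ - w2 ⟨i, j⟩) - (w1 ⟨i, J i⟩ - w2 ⟨i, J i⟩)) * q.1 ⟨i, j⟩
        + ∑ j, w2 ⟨i, j⟩ * q.1 ⟨i, j⟩) := by
      intro i
      rw [hkey i (J' i) (h i) q.1, hkey i (J i) rfl q.1, h i]
    rw [Finset.sum_congr rfl fun i _ => hs i]
  -- the margin ε
  set ε : ℝ := Finset.univ.inf' (Finset.univ_nonempty_iff.mpr ⟨J⟩)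
    (fun J' => if halfspaceJ p w1 w2 b1 b2 J' = halfspaceJ p w1 w2 b1 b2 J then 1
      else F J' - F J) with hε
  have hεpos : 0 < ε := by
    rw [hε, Finset.lt_inf'_iff]
    intro J' _
    split_ifs with h
    · norm_num
    · have : ∃ i, w1 ⟨i, J' i⟩ - w2 ⟨i, J' i⟩ ≠ w1 ⟨i, J i⟩ - w2 ⟨i, J i⟩ := by
        by_contra hc
        push_neg at hc
        exact h (heq J' hc)
      linarith [hlt J' this]
  have hεle : ∀ J', halfspaceJ p w1 w2 b1 b2 J' ≠ halfspaceJ p w1 w2 b1 b2 J →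
      ε ≤ F J' - F J := by
    intro J' hne
    have := Finset.inf'_le (b := J')
      (fun J'' => if halfspaceJ p w1 w2 b1 b2 J'' = halfspaceJ p w1 w2 b1 b2 J then 1
        else F J'' - F J) (Finset.mem_univ J')
    rw [if_neg hne] at this
    exact hε ▸ this
  -- the witness point
  refine (Set.ssubset_iff_of_subset ?_).mpr ⟨(x0, F J + ε, z0), ?_, ?_⟩
  · intro q hq
    rw [Set.mem_iInter₂]
    intro J' _
    exact Set.mem_iInter.mp hq J'
  · rw [Set.mem_iInter₂]
    intro J' hJ'
    rw [hmem]
    have := hεle J' hJ'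
    linarith
  · intro hc
    have := Set.mem_iInter.mp hc J
    rw [hmem] at this
    linarith
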